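/- There is a dimensional constant C = 4√N + 1 such that for any 1-Lipschitz u : εℤ^N → ℝ with {u < 0} and {u ≥ 0} nonempty, and any i ∈ εℤ^N with u_i ≥ 0, one has sd⁺[u]_i ≤ dist(i, {j ∈ εℤ^N : u_j < 0}) ≤ sd⁺[u]_i + Cε. -/

import Mathlib

noncomputable section

def pt (N : ℕ) (ε : ℝ) (i : Fin N → ℤ) : EuclideanSpace ℝ (Fin N) :=
  (WithLp.equiv 2 (Fin N → ℝ)).symm fun n => ε * (i n)

def LatLip (N : ℕ) (ε : ℝ) (u : (Fin N → ℤ) → ℝ) : Prop :=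
  ∀ i j, |u i - u j| ≤ ‖pt N ε i - pt N ε j‖


lemma norm_le_of_coords (N : ℕ) (v : EuclideanSpace ℝ (Fin N)) (c : ℝ) (hc : 0 ≤ c)
    (h : ∀ n, |v n| ≤ c) : ‖v‖ ≤ Real.sqrt N * c := by
  have he : ‖v‖ = Real.sqrt (∑ n, v n ^ 2) := by
    rw [EuclideanSpace.norm_eq]; simp [Real.norm_eq_abs, sq_abs]
  rw [he]
  have h1 : (∑ n, v n ^ 2) ≤ N * c ^ 2 := by
    calc ∑ n, v n ^ 2 ≤ ∑ _n : Fin N, c ^ 2 := Finset.sum_le_sum (fun n _ => by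
          have := h n; nlinarith [abs_nonneg (v n), sq_abs (v n)])
      _ = N * c ^ 2 := by simp [Finset.sum_const]
  calc Real.sqrt (∑ n, v n ^ 2) ≤ Real.sqrt (N * c ^ 2) := Real.sqrt_le_sqrt h1
    _ = Real.sqrt N * c := by
        rw [Real.sqrt_mul (by positivity), Real.sqrt_sq hc]

lemma key (N : ℕ) (ε : ℝ) (hε : 0 < ε) (u : (Fin N → ℤ) → ℝ) (hLip : LatLip N ε u)
    (i k : Fin N → ℤ) (hi : 0 ≤ u i) (hk : u k < 0) :
    ∃ m, u m < 0 ∧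
      ‖pt N ε i - pt N ε m‖ ≤ u k + ‖pt N ε k - pt N ε i‖ + (2 * Real.sqrt N + 1) * ε := by
  set p := pt N ε with hp
  set D := ‖p i - p k‖ with hD
  have hsN : (0:ℝ) ≤ Real.sqrt N := Real.sqrt_nonneg _
  have hDpos : 0 < D := by
    have h1 : |u i - u k| ≤ D := hLip i k
    have h2 : 0 < u i - u k := by linarith
    calc (0:ℝ) < u i - u k := h2
      _ ≤ |u i - u k| := le_abs_self _
      _ ≤ D := h1
  set T : ℕ := ⌈D / ε⌉₊ with hT
  have hTpos : 0 < T := Nat.ceil_pos.mpr (by positivity)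
  have hTR : (0:ℝ) < T := by exact_mod_cast hTpos
  have hDT : D ≤ T * ε := by
    have := Nat.le_ceil (D / ε)
    rw [div_le_iff₀ hε] at this
    exact this
  set y : ℕ → EuclideanSpace ℝ (Fin N) := fun t => p i + ((t : ℝ)/T) • (p k - p i) with hy
  set m : ℕ → (Fin N → ℤ) := fun t n => round (y t n / ε) with hm
  have hyc : ∀ t n, y t n = ε * (i n) + ((t:ℝ)/T) * (ε * (k n) - ε * (i n)) := fun t n => rfl
  have hm0 : m 0 = i := by
    funext n
    simp only [hm, hyc]
    rw [show ((0:ℕ):ℝ)/T = 0 by simp]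
    rw [mul_comm ε ((i n):ℝ)]
    simp [mul_div_assoc, div_self hε.ne', round_intCast]
  have hmT : m T = k := by
    funext n
    simp only [hm, hyc]
    rw [div_self hTR.ne']
    have : ε * (i n) + 1 * (ε * k n - ε * i n) = (k n) * ε := by ring
    rw [this]
    simp [mul_div_assoc, div_self hε.ne', round_intCast]
  have hA : ∀ t, ‖p (m t) - y t‖ ≤ Real.sqrt N * (ε / 2) := by
    intro t
    apply norm_le_of_coords _ _ _ (by positivity)
    intro n
    have hco : (p (m t) - y t) n = ε * round (y t n / ε) - y t n := rfl
    rw [hco]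
    have : ε * round (y t n / ε) - y t n = ε * ((round (y t n / ε) : ℝ) - y t n / ε) := by
      field_simp
    rw [this, abs_mul, abs_of_pos hε]
    have := abs_sub_round (y t n / ε)
    rw [abs_sub_comm]
    nlinarith
  have hB : ∀ t : ℕ, ‖y (t+1) - y t‖ ≤ ε := by
    intro t
    have h1 : y (t+1) - y t = ((1:ℝ)/T) • (p k - p i) := by
      simp only [hy]
      rw [add_sub_add_left_eq_sub, ← sub_smul]
      congr 1
      push_cast
      field_simp
      ring
    rw [h1, norm_smul, Real.norm_eq_abs, abs_of_pos (by positivity : (0:ℝ) < 1/(T:ℝ))]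
    rw [norm_sub_rev]
    rw [div_mul_eq_mul_div, one_mul, div_le_iff₀ hTR]
    calc D ≤ T * ε := hDT
      _ = ε * T := by ring
  have hseg : ∀ t : ℕ, t ≤ T → ‖p i - y t‖ + ‖y t - p k‖ ≤ D := by
    intro t ht
    have hθ0 : (0:ℝ) ≤ (t:ℝ)/T := by positivity
    have hθ1 : (t:ℝ)/T ≤ 1 := by
      rw [div_le_one hTR]; exact_mod_cast ht
    have h1 : p i - y t = (-((t:ℝ)/T)) • (p k - p i) := by
      simp only [hy]; rw [neg_smul]; abel
    have h2 : y t - p k = ((t:ℝ)/T - 1) • (p k - p i) := by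
      simp only [hy]
      rw [sub_smul, one_smul]
      abel
    rw [h1, h2, norm_smul, norm_smul, Real.norm_eq_abs, Real.norm_eq_abs,
      abs_neg, abs_of_nonneg hθ0, abs_of_nonpos (by linarith), norm_sub_rev]
    have : -((t:ℝ)/T - 1) = 1 - (t:ℝ)/T := by ring
    rw [this, hD]
    nlinarith [norm_nonneg (p i - p k)]
  have hex : ∃ t, u (m t) < 0 := ⟨T, by rw [hmT]; exact hk⟩
  set t₀ := Nat.find hex with ht₀def
  have ht₀ : u (m t₀) < 0 := Nat.find_spec hex
  have ht₀T : t₀ ≤ T := Nat.find_min' hex (by rw [hmT]; exact hk)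
  have ht₀ne : t₀ ≠ 0 := by
    intro h
    rw [h, hm0] at ht₀
    linarith
  obtain ⟨s, hs⟩ : ∃ s, t₀ = s + 1 := ⟨t₀ - 1, (Nat.succ_pred_eq_of_pos (Nat.pos_of_ne_zero ht₀ne)).symm⟩
  have hus : 0 ≤ u (m s) := by
    have := Nat.find_min hex (by omega : s < t₀)
    linarith [not_lt.mp this]
  have hstep : ‖p (m t₀) - p (m s)‖ ≤ (Real.sqrt N + 1) * ε := by
    calc ‖p (m t₀) - p (m s)‖
        ≤ ‖p (m t₀) - y t₀‖ + ‖y t₀ - p (m s)‖ := norm_sub_le_norm_sub_add_norm_sub _ _ _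
      _ ≤ ‖p (m t₀) - y t₀‖ + (‖y t₀ - y s‖ + ‖y s - p (m s)‖) := by
          linarith [norm_sub_le_norm_sub_add_norm_sub (y t₀) (y s) (p (m s))]
      _ ≤ Real.sqrt N * (ε/2) + (ε + Real.sqrt N * (ε/2)) := by
          have h1 := hA t₀
          have h2 := hA s
          rw [norm_sub_rev] at h2
          have h3 : ‖y t₀ - y s‖ ≤ ε := by rw [hs]; exact hB s
          linarith
      _ = (Real.sqrt N + 1) * ε := by ring
  have hum : -((Real.sqrt N + 1) * ε) ≤ u (m t₀) := by
    have h1 : |u (m t₀) - u (m s)| ≤ ‖p (m t₀) - p (m s)‖ := hLip _ _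
    have := abs_le.mp (h1.trans hstep)
    linarith [this.1]
  refine ⟨m t₀, ht₀, ?_⟩
  have h1 : ‖p i - p (m t₀)‖ ≤ ‖p i - y t₀‖ + Real.sqrt N * (ε/2) := by
    have := norm_sub_le_norm_sub_add_norm_sub (p i) (y t₀) (p (m t₀))
    have h2 := hA t₀
    rw [norm_sub_rev] at h2
    linarith
  have h2 : ‖p (m t₀) - p k‖ ≤ Real.sqrt N * (ε/2) + ‖y t₀ - p k‖ := by
    have := norm_sub_le_norm_sub_add_norm_sub (p (m t₀)) (y t₀) (p k)
    have h2 := hA t₀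
    linarith
  have h3 := hseg t₀ ht₀T
  have h4 : u (m t₀) - u k ≤ ‖p (m t₀) - p k‖ := by
    have := hLip (m t₀) k
    linarith [le_abs_self (u (m t₀) - u k)]
  have h5 : ‖p k - p i‖ = D := norm_sub_rev (p i) (p k) ▸ rfl
  rw [h5]
  linarith

def dplus (N : ℕ) (ε : ℝ) (u : (Fin N → ℤ) → ℝ) (i : Fin N → ℤ) : ℝ :=
  sInf {x | ∃ j, u j < 0 ∧ x = u j + ‖pt N ε j - pt N ε i‖}

def sdplus (N : ℕ) (ε : ℝ) (u : (Fin N → ℤ) → ℝ) (i : Fin N → ℤ) : ℝ :=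
  sSup {x | ∃ j, 0 ≤ u j ∧ x = dplus N ε u j - ‖pt N ε j - pt N ε i‖}

/-- `dist(i, {j : u_j < 0})` on the lattice. -/
def latDist (N : ℕ) (ε : ℝ) (u : (Fin N → ℤ) → ℝ) (i : Fin N → ℤ) : ℝ :=
  sInf {x | ∃ j, u j < 0 ∧ x = ‖pt N ε i - pt N ε j‖}

theorem stmt4 (N : ℕ) (hN : 1 ≤ N) (ε : ℝ) (hε : 0 < ε)
    (u : (Fin N → ℤ) → ℝ) (hLip : LatLip N ε u)
    (hneg : ∃ j, u j < 0) (hpos : ∃ j, 0 ≤ u j) :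
    ∀ i, 0 ≤ u i →
      sdplus N ε u i ≤ latDist N ε u i ∧
      latDist N ε u i ≤ sdplus N ε u i + (4 * Real.sqrt N + 1) * ε := by
  intro i hi
  set p := pt N ε with hp
  obtain ⟨k₀, hk₀⟩ := hneg
  have htri : ∀ a b c : Fin N → ℤ, ‖p a - p c‖ ≤ ‖p a - p b‖ + ‖p b - p c‖ :=
    fun a b c => norm_sub_le_norm_sub_add_norm_sub _ _ _
  -- dplus facts
  have hdBdd : ∀ j, BddBelow {x | ∃ k, u k < 0 ∧ x = u k + ‖p k - p j‖} := by
    intro j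
    refine ⟨u j, fun x ⟨k, hk, hx⟩ => ?_⟩
    have h1 : |u j - u k| ≤ ‖p j - p k‖ := hLip j k
    have h2 := le_abs_self (u j - u k)
    rw [norm_sub_rev] at h1
    rw [hx]; linarith
  have hdNE : ∀ j, Set.Nonempty {x | ∃ k, u k < 0 ∧ x = u k + ‖p k - p j‖} :=
    fun j => ⟨_, k₀, hk₀, rfl⟩
  have hd_le : ∀ j k, u k < 0 → dplus N ε u j ≤ u k + ‖p k - p j‖ :=
    fun j k hk => csInf_le (hdBdd j) ⟨k, hk, rfl⟩
  -- latDist facts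
  have hlatBdd : BddBelow {x | ∃ j, u j < 0 ∧ x = ‖p i - p j‖} :=
    ⟨0, fun x ⟨j, _, hx⟩ => hx ▸ norm_nonneg _⟩
  have hlatNE : Set.Nonempty {x | ∃ j, u j < 0 ∧ x = ‖p i - p j‖} := ⟨_, k₀, hk₀, rfl⟩
  -- sdplus facts
  have hsNE : Set.Nonempty {x | ∃ j, 0 ≤ u j ∧ x = dplus N ε u j - ‖p j - p i‖} :=
    ⟨_, i, hi, rfl⟩
  have hsBdd : BddAbove {x | ∃ j, 0 ≤ u j ∧ x = dplus N ε u j - ‖p j - p i‖} := by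
    refine ⟨‖p k₀ - p i‖, fun x ⟨j, hj, hx⟩ => ?_⟩
    have h1 := hd_le j k₀ hk₀
    have h2 := htri k₀ i j
    rw [norm_sub_rev (p i) (p j)] at h2
    rw [hx]; linarith
  constructor
  · -- sdplus ≤ latDist
    apply csSup_le hsNE
    rintro x ⟨j, hj, hx⟩
    apply le_csInf hlatNE
    rintro b ⟨k, hk, hb⟩
    have h1 := hd_le j k hk
    have h2 := htri k i j
    rw [norm_sub_rev (p i) (p j)] at h2
    rw [norm_sub_rev (p i) (p k)] at hb
    rw [hx, hb]; linarith
  · -- latDist ≤ sdplus + Cε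
    have hsd : dplus N ε u i ≤ sdplus N ε u i := by
      have : dplus N ε u i - ‖p i - p i‖ ∈
          {x | ∃ j, 0 ≤ u j ∧ x = dplus N ε u j - ‖p j - p i‖} := ⟨i, hi, rfl⟩
      have h := le_csSup hsBdd this
      simp at h; exact h
    have hsN1 : (1:ℝ) ≤ Real.sqrt N := by
      have h1 : (1:ℝ) ≤ (N:ℝ) := by exact_mod_cast hN
      nlinarith [Real.sq_sqrt (by positivity : (0:ℝ) ≤ (N:ℝ)), Real.sqrt_nonneg (N:ℝ)]
    have hmain : latDist N ε u i - (4 * Real.sqrt N + 1) * ε ≤ dplus N ε u i := by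
      apply le_csInf (hdNE i)
      rintro b ⟨k, hk, hb⟩
      obtain ⟨m, hm, hmle⟩ := key N ε hε u hLip i k hi hk
      have hld : latDist N ε u i ≤ ‖p i - p m‖ := csInf_le hlatBdd ⟨m, hm, rfl⟩
      rw [hb]
      nlinarith
    linarith
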